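/- arXiv:1409.7890 — 3 statements merged into one kernel-verified Lean document; each statement's English description precedes it below -/
import Mathlib

section
/- Let P be a convex polytope in R^n, let y be an interior point of P, and let f: P → P be continuous with y not in the image of f. Define g: P → ∂P by letting g(x) be the unique point where the ray from f(x) through y meets the boundary of P. Then g is continuous, and any fixed point x₀ of g lies in a proper face F of P with f(x₀) ∉ F. -/
/-- `F` is a face of the convex set `P`: either `P` itself, or the intersection of
`P` with a supporting hyperplane. -/
def IsFaceOf {E : Type*} [NormedAddCommGroup E] [NormedSpace ℝ E] (F P : Set E) : Prop :=
  F = P ∨ ∃ (l : E →L[ℝ] ℝ) (c : ℝ), (∀ x ∈ P, l x ≤ c) ∧ F = {x ∈ P | l x = c}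

/-- Let `P` be a polytope, `y` an interior point of `P`, and `f : P → P` continuous
with `y` not in the image of `f`. If `g : P → ∂P` maps each `x` to the (unique) point
where the ray from `f(x)` through `y` meets the boundary of `P`, then `g` is
continuous, and every fixed point `x₀` of `g` lies in a proper face `F` of `P`
with `f(x₀) ∉ F`. -/
theorem ray_retraction_fixed_point (n : ℕ)
    (S : Finset (EuclideanSpace ℝ (Fin n)))
    (P : Set (EuclideanSpace ℝ (Fin n)))
    (hP : P = convexHull ℝ (S : Set (EuclideanSpace ℝ (Fin n))))
    (y : EuclideanSpace ℝ (Fin n)) (hy : y ∈ interior P)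
    (f : C(P, P))
    (hyf : ∀ x : P, (f x : EuclideanSpace ℝ (Fin n)) ≠ y)
    (g : P → EuclideanSpace ℝ (Fin n))
    (hg : ∀ x : P, g x ∈ frontier P ∧
      ∃ t : ℝ, 1 ≤ t ∧ g x = (f x : EuclideanSpace ℝ (Fin n)) +
        t • (y - (f x : EuclideanSpace ℝ (Fin n)))) :
    Continuous g ∧
      ∀ x₀ : P, g x₀ = (x₀ : EuclideanSpace ℝ (Fin n)) →
        ∃ F, IsFaceOf F P ∧ F ≠ P ∧ (x₀ : EuclideanSpace ℝ (Fin n)) ∈ F ∧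
          (f x₀ : EuclideanSpace ℝ (Fin n)) ∉ F := by
  classical
  have hPcomp : IsCompact P := hP ▸ S.finite_toSet.isCompact_convexHull ℝ
  have hPconv : Convex ℝ P := hP ▸ convex_convexHull ℝ _
  -- translate so that `y` becomes the origin
  set T : EuclideanSpace ℝ (Fin n) ≃ₜ EuclideanSpace ℝ (Fin n) := Homeomorph.addLeft (-y) with hT
  set Q : Set (EuclideanSpace ℝ (Fin n)) := T '' P with hQ
  have hQconv : Convex ℝ Q := hPconv.translate (-y)
  have hQ0 : (0 : EuclideanSpace ℝ (Fin n)) ∈ interior Q := by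
    rw [hQ, ← T.image_interior]
    exact ⟨y, hy, by simp [hT]⟩
  have hQnhds : Q ∈ nhds (0 : EuclideanSpace ℝ (Fin n)) := mem_interior_iff_mem_nhds.mp hQ0
  have hgc : Continuous (gauge Q) := continuous_gauge hQconv hQnhds
  -- positivity of the gauge
  obtain ⟨R, hR0, hQR⟩ := ((hPcomp.image T.continuous).isBounded).subset_ball_lt 0 0
  have hgpos : ∀ v : EuclideanSpace ℝ (Fin n), v ≠ 0 → 0 < gauge Q v := by
    intro v hv
    have h1 : gauge (Metric.ball (0 : EuclideanSpace ℝ (Fin n)) R) v ≤ gauge Q v :=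
      gauge_mono (absorbent_nhds_zero hQnhds) hQR v
    rw [gauge_ball hR0.le] at h1
    have : 0 < ‖v‖ / R := div_pos (norm_pos_iff.mpr hv) hR0
    linarith
  have hvne : ∀ x : P, y - (f x : EuclideanSpace ℝ (Fin n)) ≠ 0 := fun x => sub_ne_zero.mpr (hyf x).symm
  -- the explicit formula for `g`
  have hkey : ∀ x : P, g x = y + (gauge Q (y - (f x : EuclideanSpace ℝ (Fin n))))⁻¹ • (y - (f x : EuclideanSpace ℝ (Fin n))) := by
    intro x
    obtain ⟨hfr, t, ht1, hgx⟩ := hg x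
    have h1 : g x - y = (t - 1) • (y - (f x : EuclideanSpace ℝ (Fin n))) := by
      rw [hgx]; module
    have h2 : g x - y ∈ frontier Q := by
      rw [hQ, ← T.image_frontier]
      exact ⟨g x, hfr, by simp [hT]; abel⟩
    have h3 : gauge Q ((t - 1) • (y - (f x : EuclideanSpace ℝ (Fin n)))) = 1 := by
      rw [← h1]
      exact (gauge_eq_one_iff_mem_frontier hQconv hQnhds).mpr h2
    rw [gauge_smul_of_nonneg (by linarith : (0:ℝ) ≤ t - 1), smul_eq_mul] at h3
    have h5 : gauge Q (y - (f x : EuclideanSpace ℝ (Fin n))) ≠ 0 := by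
      intro h; rw [h, mul_zero] at h3; norm_num at h3
    have h6 : t - 1 = (gauge Q (y - (f x : EuclideanSpace ℝ (Fin n))))⁻¹ := by
      field_simp
      linarith [h3]
    rw [hgx, ← h6]
    module
  constructor
  · -- continuity
    have hfc : Continuous fun x : P => (f x : EuclideanSpace ℝ (Fin n)) := continuous_subtype_val.comp f.continuous
    have hvc : Continuous fun x : P => y - (f x : EuclideanSpace ℝ (Fin n)) := continuous_const.sub hfc
    have : Continuous fun x : P =>
        y + (gauge Q (y - (f x : EuclideanSpace ℝ (Fin n))))⁻¹ • (y - (f x : EuclideanSpace ℝ (Fin n))) :=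
      continuous_const.add
        (((hgc.comp hvc).inv₀ fun x => (hgpos _ (hvne x)).ne').smul hvc)
    exact (funext hkey : g = _) ▸ this
  · -- fixed points lie in proper faces
    intro x₀ hx₀
    have hfr : (x₀ : EuclideanSpace ℝ (Fin n)) ∈ frontier P := hx₀ ▸ (hg x₀).1
    have hni : (x₀ : EuclideanSpace ℝ (Fin n)) ∉ interior P := fun h => hfr.2 h
    obtain ⟨l, hl⟩ := geometric_hahn_banach_open_point (hPconv.interior) isOpen_interior hni
    have hylt : l y < l x₀ := hl y hy
    have hle : ∀ x ∈ P, l x ≤ l x₀ := by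
      intro x hx
      have h1 : ∀ ε : ℝ, ε ∈ Set.Ioo (0:ℝ) 1 → (1 - ε) * l x + ε * l y < l x₀ := by
        intro ε hε
        have hz : (1 - ε) • x + ε • y ∈ interior P :=
          hPconv.combo_closure_interior_mem_interior (subset_closure hx) hy
            (by linarith [hε.2]) hε.1 (by ring)
        have := hl _ hz
        simpa [smul_eq_mul] using this
      have h2 : Filter.Tendsto (fun ε : ℝ => (1 - ε) * l x + ε * l y)
          (nhdsWithin 0 (Set.Ioi 0)) (nhds (l x)) := by
        have hc : Continuous fun ε : ℝ => (1 - ε) * l x + ε * l y := by fun_prop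
        have := (hc.tendsto 0).mono_left
          (nhdsWithin_le_nhds : nhdsWithin (0:ℝ) (Set.Ioi 0) ≤ nhds 0)
        simpa using this
      refine le_of_tendsto h2 ?_
      filter_upwards [Ioo_mem_nhdsGT_of_mem (Set.left_mem_Ico.mpr one_pos)] with ε hε
      exact (h1 ε hε).le
    refine ⟨{x ∈ P | l x = l x₀}, Or.inr ⟨l, l x₀, hle, rfl⟩, ?_, ⟨x₀.2, rfl⟩, ?_⟩
    · intro h
      have hyP : y ∈ P := interior_subset hy
      rw [← h] at hyP
      exact absurd hyP.2 hylt.ne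
    · rintro ⟨-, hfc⟩
      obtain ⟨-, t, ht1, hgx⟩ := hg x₀
      rw [hx₀] at hgx
      have := congrArg l hgx
      simp only [map_add, map_smul, map_sub, smul_eq_mul] at this
      rw [hfc] at this
      nlinarith
end

section
/- Let F ⊆ 2^E with |E| = m, and let c(F) be the decision-tree complexity of F. Then (1+t)^{m−c(F)} divides the generating polynomial p_F(t) = Σ_{A∈F} t^{|A|} in Z[t]. -/
/-- A binary decision tree: leaves hold answers, internal nodes query an element
(left subtree = answer NO, right subtree = answer YES). -/
inductive DTree (α : Type*) where
  | leaf : Bool → DTree α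
  | node : α → DTree α → DTree α → DTree α

/-- Evaluate a decision tree on an input set (given by its characteristic function). -/
def DTree.eval {α : Type*} : DTree α → (α → Bool) → Bool
  | .leaf b, _ => b
  | .node e t0 t1, A => if A e then t1.eval A else t0.eval A

/-- The depth (worst-case number of queries) of a decision tree. -/
def DTree.depth {α : Type*} : DTree α → ℕ
  | .leaf _ => 0
  | .node _ t0 t1 => max t0.depth t1.depth + 1

/-- The tree `T` decides membership in the set system `F`. -/
def Decides {α : Type*} [DecidableEq α] (F : Finset (Finset α)) (T : DTree α) : Prop :=
  ∀ A : Finset α, T.eval (fun e => decide (e ∈ A)) = decide (A ∈ F)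

/-- The decision-tree (argument) complexity `c(F)` of a set system `F`. -/
noncomputable def dtComplexity (α : Type*) [DecidableEq α] (F : Finset (Finset α)) : ℕ :=
  sInf {d | ∃ T : DTree α, Decides F T ∧ T.depth = d}

open Polynomial Finset

lemma sum_powerset_pow {α : Type*} [DecidableEq α] (S : Finset α) :
    ∑ C ∈ S.powerset, (X : ℤ[X]) ^ C.card = (1 + X) ^ S.card := by
  have := Finset.prod_add (fun _ : α => (X : ℤ[X])) (fun _ => 1) S
  simp only [Finset.prod_const, one_pow, mul_one] at this
  rw [add_comm (1 : ℤ[X]) X]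
  exact this.symm

lemma key {α : Type*} [DecidableEq α] (T : DTree α) (S B : Finset α) (hdisj : Disjoint S B) :
    (1 + X : ℤ[X]) ^ (S.card - T.depth) ∣
      ∑ C ∈ S.powerset, (if T.eval (fun x => decide (x ∈ B ∪ C)) then (X : ℤ[X]) ^ C.card else 0) := by
  induction T generalizing S B with
  | leaf b =>
    cases b with
    | false => simp [DTree.eval]
    | true => simp [DTree.eval, DTree.depth, sum_powerset_pow]
  | node e t0 t1 ih0 ih1 =>
    by_cases he : e ∈ S
    · have heB : e ∉ B := Finset.disjoint_left.mp hdisj he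
      set S' := S.erase e with hS'
      have heS' : e ∉ S' := Finset.notMem_erase e S
      have hins : insert e S' = S := Finset.insert_erase he
      have hcard : S'.card = S.card - 1 := Finset.card_erase_of_mem he
      have hpos : 1 ≤ S.card := Finset.card_pos.mpr ⟨e, he⟩
      have hcard' : (insert e S').card = S'.card + 1 :=
        Finset.card_insert_of_notMem heS'
      rw [← hins, Finset.sum_powerset_insert heS']
      have h1 : ∑ C ∈ S'.powerset,
          (if (DTree.node e t0 t1).eval (fun x => decide (x ∈ B ∪ C)) then (X : ℤ[X]) ^ C.card else 0)
          = ∑ C ∈ S'.powerset,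
          (if t0.eval (fun x => decide (x ∈ B ∪ C)) then (X : ℤ[X]) ^ C.card else 0) := by
        refine Finset.sum_congr rfl fun C hC => ?_
        have hC' : C ⊆ S' := Finset.mem_powerset.mp hC
        have heC : e ∉ B ∪ C := by
          simp only [Finset.mem_union]
          rintro (h | h)
          · exact heB h
          · exact heS' (hC' h)
        simp [DTree.eval, heC]
      have h2 : ∑ C ∈ S'.powerset,
          (if (DTree.node e t0 t1).eval (fun x => decide (x ∈ B ∪ insert e C)) then
            (X : ℤ[X]) ^ (insert e C).card else 0)
          = X * ∑ C ∈ S'.powerset,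
          (if t1.eval (fun x => decide (x ∈ (insert e B) ∪ C)) then (X : ℤ[X]) ^ C.card else 0) := by
        rw [Finset.mul_sum]
        refine Finset.sum_congr rfl fun C hC => ?_
        have hC' : C ⊆ S' := Finset.mem_powerset.mp hC
        have heC : e ∉ C := fun h => heS' (hC' h)
        have hset : B ∪ insert e C = insert e B ∪ C := by
          ext x; simp only [Finset.mem_insert, Finset.mem_union]; tauto
        have hmem : decide (e ∈ insert e B ∪ C) = true := by simp
        have hcard2 : (insert e C).card = C.card + 1 := Finset.card_insert_of_notMem heC
        simp only [DTree.eval, hset, hmem, if_true, hcard2, pow_succ]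
        rw [mul_ite, mul_zero]
        split <;> ring
      rw [h1, h2]
      have hd0 : Disjoint S' B := Finset.disjoint_of_subset_left (Finset.erase_subset _ _) hdisj
      have hd1 : Disjoint S' (insert e B) := by
        rw [Finset.disjoint_insert_right]
        exact ⟨heS', hd0⟩
      refine dvd_add ?_ ?_
      · exact dvd_trans (pow_dvd_pow _ (by simp only [DTree.depth, hcard']; omega)) (ih0 S' B hd0)
      · exact Dvd.dvd.mul_left
          (dvd_trans (pow_dvd_pow _ (by simp only [DTree.depth, hcard']; omega))
            (ih1 S' (insert e B) hd1)) X
    · have h1 : ∑ C ∈ S.powerset,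
          (if (DTree.node e t0 t1).eval (fun x => decide (x ∈ B ∪ C)) then (X : ℤ[X]) ^ C.card else 0)
          = ∑ C ∈ S.powerset,
          (if (if decide (e ∈ B) then t1 else t0).eval (fun x => decide (x ∈ B ∪ C)) then
            (X : ℤ[X]) ^ C.card else 0) := by
        refine Finset.sum_congr rfl fun C hC => ?_
        have hC' : C ⊆ S := Finset.mem_powerset.mp hC
        have : decide (e ∈ B ∪ C) = decide (e ∈ B) := by
          simp only [Finset.mem_union, decide_eq_decide]
          exact ⟨fun h => h.resolve_right (fun h' => he (hC' h')), Or.inl⟩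
        simp only [DTree.eval, this]
        by_cases hb : e ∈ B <;> simp [hb]
      rw [h1]
      by_cases hb : e ∈ B <;> simp only [hb, decide_true, decide_false, if_true, if_false]
      · exact dvd_trans (pow_dvd_pow _ (by simp only [DTree.depth]; omega)) (ih1 S B hdisj)
      · exact dvd_trans (pow_dvd_pow _ (by simp only [DTree.depth]; omega)) (ih0 S B hdisj)

section build
variable {α : Type*} [DecidableEq α] (F : Finset (Finset α))

def buildTree : List α → Finset α → DTree α
  | [], acc => .leaf (decide (acc ∈ F))
  | e :: l, acc => .node e (buildTree l acc) (buildTree l (insert e acc))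

lemma buildTree_eval (l : List α) (acc : Finset α) (A : Finset α) :
    (buildTree F l acc).eval (fun x => decide (x ∈ A)) =
      decide ((acc ∪ A.filter (fun x => x ∈ l)) ∈ F) := by
  induction l generalizing acc with
  | nil => simp [buildTree, DTree.eval]
  | cons e l ih =>
    simp only [buildTree, DTree.eval]
    by_cases hA : e ∈ A
    · simp only [hA, decide_true, if_true, ih]
      have hset : insert e acc ∪ A.filter (fun x => x ∈ l)
          = acc ∪ A.filter (fun x => x ∈ e :: l) := by
        ext x
        by_cases hx : x = e <;>
          simp [hx, hA, Finset.mem_filter, List.mem_cons] <;> tauto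
      rw [hset]
    · simp only [hA, decide_false, if_false, ih]
      have hset : acc ∪ A.filter (fun x => x ∈ l)
          = acc ∪ A.filter (fun x => x ∈ e :: l) := by
        ext x
        by_cases hx : x = e <;>
          simp [hx, hA, Finset.mem_filter, List.mem_cons] <;> tauto
      rw [hset]
      simp

end build


/-- For a set system `F ⊆ 2^E` with `|E| = m` and decision-tree complexity `c(F)`,
the polynomial `(1+t)^{m-c(F)}` divides the generating polynomial
`p_F(t) = Σ_{A ∈ F} t^{|A|}` in `ℤ[t]`. -/
theorem one_add_X_pow_dvd_generating_poly (α : Type*) [Fintype α] [DecidableEq α]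
    (F : Finset (Finset α)) :
    (1 + Polynomial.X : Polynomial ℤ) ^ (Fintype.card α - dtComplexity α F) ∣
      ∑ A ∈ F, (Polynomial.X : Polynomial ℤ) ^ A.card := by

  have hne : {d | ∃ T : DTree α, Decides F T ∧ T.depth = d}.Nonempty := by
    refine ⟨(buildTree F Finset.univ.toList ∅).depth, buildTree F Finset.univ.toList ∅, ?_, rfl⟩
    intro A
    rw [buildTree_eval]
    have : A.filter (fun x => x ∈ Finset.univ.toList) = A :=
      Finset.filter_true_of_mem (fun x _ => by simp)
    rw [Finset.empty_union, this]
  obtain ⟨T, hT, hdep⟩ := Nat.sInf_mem hne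
  have hkey := key T Finset.univ ∅ (Finset.disjoint_empty_right _)
  rw [hdep] at hkey
  have hs : (∑ C ∈ (Finset.univ : Finset α).powerset,
      (if T.eval (fun x => decide (x ∈ ∅ ∪ C)) then (X : ℤ[X]) ^ C.card else 0))
      = ∑ A ∈ F, (X : ℤ[X]) ^ A.card := by
    rw [← Finset.sum_filter]
    refine Finset.sum_congr ?_ (fun _ _ => rfl)
    ext A
    simp only [Finset.mem_filter, Finset.mem_powerset, Finset.empty_union, hT A]
    simp
  rw [← hs]
  unfold dtComplexity
  rw [← Finset.card_univ]
  exact hkey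
end

section
/- If a set system F ⊆ 2^E is non-evasive (i.e., its decision-tree complexity c(F) is strictly less than |E|), then the number of sets of F of even cardinality equals the number of sets of F of odd cardinality; in particular |F| is even. -/
/-- Full decision tree querying the elements of `l`, having already determined
that the input contains exactly `acc` among previously queried elements. -/
def fullTree {α : Type*} [DecidableEq α] (F : Finset (Finset α)) :
    List α → Finset α → DTree α
  | [], acc => .leaf (decide (acc ∈ F))
  | x :: l, acc => .node x (fullTree F l acc) (fullTree F l (insert x acc))

lemma fullTree_eval {α : Type*} [DecidableEq α] (F : Finset (Finset α)) :
    ∀ (l : List α) (acc A : Finset α),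
      (fullTree F l acc).eval (fun e => decide (e ∈ A)) =
        decide ((acc ∪ A.filter (· ∈ l)) ∈ F)
  | [], acc, A => by simp [fullTree, DTree.eval]
  | x :: l, acc, A => by
    simp only [fullTree, DTree.eval]
    by_cases hx : x ∈ A
    · rw [if_pos (by simp [hx]), fullTree_eval]
      have hset : insert x acc ∪ A.filter (· ∈ l) = acc ∪ A.filter (· ∈ x :: l) := by
        ext y
        simp only [Finset.mem_union, Finset.mem_insert, Finset.mem_filter, List.mem_cons]
        constructor
        · rintro ((rfl | h) | ⟨hA, hl⟩)
          · exact Or.inr ⟨hx, Or.inl rfl⟩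
          · exact Or.inl h
          · exact Or.inr ⟨hA, Or.inr hl⟩
        · rintro (h | ⟨hA, rfl | hl⟩)
          · exact Or.inl (Or.inr h)
          · exact Or.inl (Or.inl rfl)
          · exact Or.inr ⟨hA, hl⟩
      rw [hset]
    · rw [if_neg (by simp [hx]), fullTree_eval]
      have hset : A.filter (· ∈ l) = A.filter (· ∈ x :: l) := by
        ext y
        simp only [Finset.mem_filter, List.mem_cons]
        constructor
        · rintro ⟨hA, hl⟩; exact ⟨hA, Or.inr hl⟩
        · rintro ⟨hA, rfl | hl⟩
          · exact absurd hA hx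
          · exact ⟨hA, hl⟩
      rw [hset]

lemma key_signed_sum {α : Type*} [DecidableEq α] :
    ∀ (T : DTree α) (s B : Finset α), Disjoint s B → T.depth < s.card →
      ∑ A ∈ s.powerset, (-1 : ℤ) ^ A.card *
        (if T.eval (fun e => decide (e ∈ A ∪ B)) then 1 else 0) = 0
  | .leaf b, s, B, _, hd => by
    have hs : s.Nonempty := Finset.card_pos.mp (Nat.lt_of_le_of_lt (Nat.zero_le _) hd)
    simp only [DTree.eval]
    have hpull : ∑ x ∈ s.powerset, (-1 : ℤ) ^ x.card * (if b = true then 1 else 0)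
        = (∑ x ∈ s.powerset, (-1 : ℤ) ^ x.card) * (if b = true then (1 : ℤ) else 0) :=
      (Finset.sum_mul _ _ _).symm
    exact hpull.trans (by rw [Finset.sum_powerset_neg_one_pow_card_of_nonempty hs, zero_mul])
  | .node e t0 t1, s, B, hdisj, hd => by
    have hmax : max t0.depth t1.depth + 1 < s.card := hd
    have h0 : t0.depth < s.card :=
      Nat.lt_of_le_of_lt (le_max_left _ _) (Nat.lt_of_succ_lt hmax)
    have h1 : t1.depth < s.card :=
      Nat.lt_of_le_of_lt (le_max_right _ _) (Nat.lt_of_succ_lt hmax)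
    by_cases he : e ∈ s
    · have heB : e ∉ B := fun hB => (Finset.disjoint_left.mp hdisj he) hB
      set s' := s.erase e with hs'
      have hes' : e ∉ s' := Finset.notMem_erase e s
      have hcardE : s'.card + 1 = s.card := Finset.card_erase_add_one he
      have hins : insert e s' = s := Finset.insert_erase he
      have hm0 : t0.depth ≤ max t0.depth t1.depth := le_max_left _ _
      have hm1 : t1.depth ≤ max t0.depth t1.depth := le_max_right _ _
      have hd0 : t0.depth < s'.card := by omega
      have hd1 : t1.depth < s'.card := by omega
      have hdisj' : Disjoint s' B :=
        Finset.disjoint_of_subset_left (Finset.erase_subset _ _) hdisj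
      rw [← hins, Finset.sum_powerset_insert hes']
      have e1 : ∑ A ∈ s'.powerset, (-1 : ℤ) ^ A.card *
          (if DTree.eval (.node e t0 t1) (fun x => decide (x ∈ A ∪ B)) then 1 else 0) =
          ∑ A ∈ s'.powerset, (-1 : ℤ) ^ A.card *
          (if t0.eval (fun x => decide (x ∈ A ∪ B)) then 1 else 0) := by
        apply Finset.sum_congr rfl
        intro A hA
        have hA' : A ⊆ s' := Finset.mem_powerset.mp hA
        have heA : e ∉ A ∪ B := by
          simp only [Finset.mem_union]
          rintro (h | h)
          · exact hes' (hA' h)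
          · exact heB h
        simp [DTree.eval, heA]
      have e2 : ∑ A ∈ s'.powerset, (-1 : ℤ) ^ (insert e A).card *
          (if DTree.eval (.node e t0 t1) (fun x => decide (x ∈ insert e A ∪ B)) then 1 else 0) =
          -∑ A ∈ s'.powerset, (-1 : ℤ) ^ A.card *
          (if t1.eval (fun x => decide (x ∈ A ∪ insert e B)) then 1 else 0) := by
        rw [← Finset.sum_neg_distrib]
        apply Finset.sum_congr rfl
        intro A hA
        have hA' : A ⊆ s' := Finset.mem_powerset.mp hA
        have heA : e ∉ A := fun h => hes' (hA' h)
        have hcardA : (insert e A).card = A.card + 1 := Finset.card_insert_of_notMem heA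
        have hset : insert e A ∪ B = A ∪ insert e B := by
          ext y; simp only [Finset.mem_union, Finset.mem_insert]; tauto
        have heIn : e ∈ insert e A ∪ B := by simp
        have heIn2 : e ∈ A ∪ insert e B := by simp
        simp only [DTree.eval, heIn, heIn2, decide_true, if_true, hset, hcardA, pow_succ]
        ring
      rw [e1, e2, key_signed_sum t0 s' B hdisj' hd0, key_signed_sum t1 s' (insert e B)
        (by rw [Finset.disjoint_insert_right]; exact ⟨hes', hdisj'⟩) hd1]
      ring
    · by_cases heB : e ∈ B
      · have hc : ∀ A ∈ s.powerset, (-1 : ℤ) ^ A.card *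
            (if DTree.eval (.node e t0 t1) (fun x => decide (x ∈ A ∪ B)) then 1 else 0) =
            (-1 : ℤ) ^ A.card * (if t1.eval (fun x => decide (x ∈ A ∪ B)) then 1 else 0) := by
          intro A hA
          have : e ∈ A ∪ B := Finset.mem_union_right _ heB
          simp [DTree.eval, this]
        rw [Finset.sum_congr rfl hc]
        exact key_signed_sum t1 s B hdisj h1
      · have hc : ∀ A ∈ s.powerset, (-1 : ℤ) ^ A.card *
            (if DTree.eval (.node e t0 t1) (fun x => decide (x ∈ A ∪ B)) then 1 else 0) =
            (-1 : ℤ) ^ A.card * (if t0.eval (fun x => decide (x ∈ A ∪ B)) then 1 else 0) := by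
          intro A hA
          have hA' : A ⊆ s := Finset.mem_powerset.mp hA
          have : e ∉ A ∪ B := by
            simp only [Finset.mem_union]
            rintro (h | h)
            · exact he (hA' h)
            · exact heB h
          simp [DTree.eval, this]
        rw [Finset.sum_congr rfl hc]
        exact key_signed_sum t0 s B hdisj h0

/-- If a set system `F ⊆ 2^E` is non-evasive (its decision-tree complexity is
strictly less than `|E|`), then `F` has as many members of even cardinality as of
odd cardinality; in particular `|F|` is even. -/
theorem nonevasive_even_odd (α : Type*) [Fintype α] [DecidableEq α]
    (F : Finset (Finset α)) (h : dtComplexity α F < Fintype.card α) :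
    (F.filter fun A => Even A.card).card = (F.filter fun A => Odd A.card).card ∧
      Even F.card := by
  have hne : {d | ∃ T : DTree α, Decides F T ∧ T.depth = d}.Nonempty := by
    refine ⟨(fullTree F (Finset.univ : Finset α).toList ∅).depth,
      fullTree F (Finset.univ : Finset α).toList ∅, ?_, rfl⟩
    intro A
    rw [fullTree_eval]
    congr 1
    rw [Finset.empty_union]
    congr 1
    apply Finset.filter_true_of_mem
    intro x _
    simp
  obtain ⟨T, hT, hdep⟩ := Nat.sInf_mem hne
  have hd : T.depth < Fintype.card α := by rw [hdep]; exact h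
  have hkey := key_signed_sum T Finset.univ ∅ (Finset.disjoint_empty_right _)
    (by rwa [Finset.card_univ])
  simp only [Finset.union_empty] at hkey
  have hkey2 : ∑ A ∈ (Finset.univ : Finset α).powerset,
      (-1 : ℤ) ^ A.card * (if A ∈ F then 1 else 0) = 0 := by
    have hpt : ∀ A : Finset α,
        (if T.eval (fun e => decide (e ∈ A)) then (1 : ℤ) else 0)
          = (if A ∈ F then (1 : ℤ) else 0) := by
      intro A
      rw [hT A]
      by_cases hAF : A ∈ F <;> simp [hAF]
    simp only [hpt] at hkey
    exact hkey
  have hF : ∑ A ∈ F, (-1 : ℤ) ^ A.card = 0 := by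
    have h1 : ∀ A ∈ (Finset.univ : Finset (Finset α)),
        (-1 : ℤ) ^ A.card * (if A ∈ F then 1 else 0) =
          if A ∈ F then (-1 : ℤ) ^ A.card else 0 := by
      intro A _; by_cases hAF : A ∈ F <;> simp [hAF]
    rw [Finset.powerset_univ, Finset.sum_congr rfl h1, Finset.sum_ite_mem,
      Finset.univ_inter] at hkey2
    exact hkey2
  have hsplit := Finset.sum_filter_add_sum_filter_not F (fun A => Even A.card)
    (fun A => (-1 : ℤ) ^ A.card)
  have hnotodd : F.filter (fun A => ¬ Even A.card) = F.filter (fun A => Odd A.card) := by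
    apply Finset.filter_congr
    intro A _
    exact Nat.not_even_iff_odd
  have he : ∑ A ∈ F.filter (fun A => Even A.card), (-1 : ℤ) ^ A.card
      = ((F.filter fun A => Even A.card).card : ℤ) := by
    rw [Finset.sum_congr rfl (fun A hA => ((Finset.mem_filter.mp hA).2).neg_one_pow),
      Finset.sum_const, nsmul_eq_mul, mul_one]
  have ho : ∑ A ∈ F.filter (fun A => ¬ Even A.card), (-1 : ℤ) ^ A.card
      = -((F.filter fun A => Odd A.card).card : ℤ) := by
    rw [hnotodd,
      Finset.sum_congr rfl (fun A hA => ((Finset.mem_filter.mp hA).2).neg_one_pow),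
      Finset.sum_const, nsmul_eq_mul, mul_neg, mul_one]
  rw [he, ho, hF] at hsplit
  have hcast : ((F.filter fun A => Even A.card).card : ℤ)
      = ((F.filter fun A => Odd A.card).card : ℤ) := by linarith
  have hcards : (F.filter fun A => Even A.card).card
      = (F.filter fun A => Odd A.card).card := by exact_mod_cast hcast
  refine ⟨hcards, ?_⟩
  have htot := Finset.card_filter_add_card_filter_not
    (s := F) (p := fun A => Even A.card)
  rw [hnotodd, ← hcards] at htot
  exact ⟨(F.filter fun A => Even A.card).card, by omega⟩
end
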